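/- Let $Q$ be an involutory quandle, $a,b,c \in Q$, and $q \geq 1$, $m \geq 0$. Assume $c \rhd a = c \rhd b$ and the relation $a^{(ac)^q} = b^{(ab)^m}$ holds. Then for all $x \in Q$, $x^{c (ac)^{2q-1}} = x^{(ba)^{2m} b}$ (the secondary relation of $R3$), and consequently $c^{(ac)^{2q}} = c$. -/
import Mathlib


/-- An involutory quandle: `x ▷ x = x`, `(x ▷ y) ▷ y = x`, and right self-distributivity. -/
structure InvQuandle (Q : Type*) where
  act : Q → Q → Q
  idem : ∀ x, act x x = x
  invol : ∀ x y, act (act x y) y = x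
  distrib : ∀ x y z, act (act x y) z = act (act x z) (act y z)

namespace InvQuandle

variable {Q : Type*}

/-- Apply a word (list of quandle elements) to `z` on the right:
`apw R z [y₁,…,y_k] = ((z ▷ y₁) ▷ y₂) ⋯ ▷ y_k`. -/
def apw (R : InvQuandle Q) (z : Q) (w : List Q) : Q := w.foldl R.act z

/-- The word `w` repeated `n` times. -/
def wpow (w : List Q) : ℕ → List Q
  | 0 => []
  | n + 1 => w ++ wpow w n

end InvQuandle

open InvQuandle

namespace InvQuandle

variable {Q : Type*} (R : InvQuandle Q)

lemma apw_append (z : Q) (w1 w2 : List Q) :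
    R.apw z (w1 ++ w2) = R.apw (R.apw z w1) w2 :=
  List.foldl_append ..

lemma apw_cons (z y : Q) (w : List Q) : R.apw z (y :: w) = R.apw (R.act z y) w := rfl

lemma apw_nil (z : Q) : R.apw z [] = z := rfl

lemma wpow_succ' (w : List Q) (n : ℕ) : wpow w (n + 1) = wpow w n ++ w := by
  induction n with
  | zero => simp [wpow]
  | succ n ih =>
    show w ++ wpow w (n + 1) = (w ++ wpow w n) ++ w
    rw [ih, List.append_assoc]

lemma reassoc (x y z : Q) : R.act x (R.act z y) = R.act (R.act (R.act x y) z) y := by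
  rw [R.distrib (R.act x y) z y, R.invol]

lemma act_apw (x z : Q) (w : List Q) :
    R.act x (R.apw z w) = R.apw x (w.reverse ++ z :: w) := by
  induction w generalizing x z with
  | nil => simp [apw]
  | cons y w ih =>
    rw [apw_cons, ih]
    have hl : (y :: w).reverse ++ z :: y :: w = w.reverse ++ (y :: z :: y :: w) := by simp
    rw [hl, apw_append, apw_append, apw_cons, apw_cons, apw_cons, apw_cons, ← reassoc]

lemma reverse_wpow (x y : Q) (n : ℕ) :
    (wpow [x, y] n).reverse = wpow [y, x] n := by
  induction n with
  | zero => simp [wpow]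
  | succ n ih =>
    show (([x, y] : List Q) ++ wpow [x, y] n).reverse = wpow [y, x] (n + 1)
    rw [List.reverse_append, ih, wpow_succ']
    rfl

/-- Claim A: `(ca)^q a (ac)^q` acts like `c (ac)^{2q-1}` (for `q ≥ 1`). -/
lemma claimA (a c : Q) (q : ℕ) (x : Q) :
    R.apw x (wpow [c, a] (q + 1) ++ a :: wpow [a, c] (q + 1)) =
      R.apw x (c :: wpow [a, c] (2 * (q + 1) - 1)) := by
  induction q generalizing x with
  | zero =>
    show R.apw x ([c, a] ++ a :: [a, c]) = R.apw x (c :: [a, c] ++ [])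
    simp [apw, R.invol]
  | succ q ih =>
    have h1 : wpow [c, a] (q + 2) ++ a :: wpow [a, c] (q + 2) =
        ([c, a] ++ (wpow [c, a] (q + 1) ++ a :: wpow [a, c] (q + 1))) ++ [a, c] := by
      show ([c, a] ++ wpow [c, a] (q + 1)) ++ a :: wpow [a, c] (q + 2) = _
      rw [wpow_succ' [a, c] (q + 1)]
      simp
    rw [h1, apw_append, apw_append, ih]
    have h2 : (c :: wpow [a, c] (2 * (q + 2) - 1)) =
        ([c, a, c] ++ wpow [a, c] (2 * (q + 1) - 1)) ++ [a, c] := by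
      have : 2 * (q + 2) - 1 = (2 * (q + 1) - 1) + 1 + 1 := by omega
      rw [this, wpow_succ']
      show c :: (([a, c] : List Q) ++ wpow [a, c] (2 * (q + 1) - 1)) ++ [a, c] = _
      simp
    rw [h2, apw_append, apw_append]
    rfl

/-- Claim B: `(ba)^m b (ab)^m = (ba)^{2m} b` as lists. -/
lemma claimB (a b : Q) (m : ℕ) :
    wpow [b, a] m ++ b :: wpow [a, b] m = wpow [b, a] (2 * m) ++ [b] := by
  induction m with
  | zero => simp [wpow]
  | succ m ih =>
    show (([b, a] : List Q) ++ wpow [b, a] m) ++ b :: wpow [a, b] (m + 1) = _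
    rw [wpow_succ' [a, b] m]
    have : 2 * (m + 1) = (2 * m + 1) + 1 := by omega
    rw [this, wpow_succ', wpow_succ']
    have h1 : (([b, a] : List Q) ++ wpow [b, a] m) ++ b :: (wpow [a, b] m ++ [a, b]) =
        [b, a] ++ (wpow [b, a] m ++ b :: wpow [a, b] m) ++ [a, b] := by simp
    rw [h1, ih]
    have hc : ([b, a] : List Q) ++ wpow [b, a] (2 * m) = wpow [b, a] (2 * m) ++ [b, a] := by
      rw [← wpow_succ']; rfl
    simp only [← List.append_assoc]
    rw [hc]
    simp

end InvQuandle

/-- if $c ▷ a = c ▷ b$ and $a^{(ac)^q} = b^{(ab)^m}$ (with $q ≥ 1$), then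
for all $x$, $x^{c (ac)^{2q-1}} = x^{(ba)^{2m} b}$, and consequently $c^{(ac)^{2q}} = c$. -/
theorem stmt15 {Q : Type*} (R : InvQuandle Q) (a b c : Q) (q m : ℕ) (hq : 1 ≤ q)
    (h : R.act c a = R.act c b)
    (hR3 : R.apw a (wpow [a, c] q) = R.apw b (wpow [a, b] m)) :
    (∀ x : Q, R.apw x ([c] ++ wpow [a, c] (2 * q - 1)) = R.apw x (wpow [b, a] (2 * m) ++ [b])) ∧
    R.apw c (wpow [a, c] (2 * q)) = c := by
  obtain ⟨q, rfl⟩ : ∃ q', q = q' + 1 := ⟨q - 1, by omega⟩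
  have key : ∀ x : Q, R.apw x ([c] ++ wpow [a, c] (2 * (q + 1) - 1)) =
      R.apw x (wpow [b, a] (2 * m) ++ [b]) := by
    intro x
    have h1 := R.act_apw x a (wpow [a, c] (q + 1))
    have h2 := R.act_apw x b (wpow [a, b] m)
    rw [hR3, h2] at h1
    simp only [reverse_wpow] at h1 h2
    rw [claimB a b m] at h1
    have := R.claimA a c q x
    rw [← h1] at this
    simpa using this.symm
  refine ⟨key, ?_⟩
  -- c^{(ac)^{2q}} : wpow [a,c] (2(q+1)) = [a] ++ ([c] ++ wpow [a,c] (2(q+1)-1))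
  have hw : wpow [a, c] (2 * (q + 1)) = a :: c :: wpow [a, c] (2 * (q + 1) - 1) := by
    have : 2 * (q + 1) = (2 * (q + 1) - 1) + 1 := by omega
    rw [this]
    rfl
  rw [hw, R.apw_cons, R.apw_cons]
  have := key (R.act c a)
  rw [List.singleton_append, R.apw_cons] at this
  rw [this, h, R.apw_append]
  -- now: apw (c▷b) (wpow [b,a] (2m)) ▷ b = c
  have fix : ∀ n, R.apw (R.act c b) (wpow [b, a] n) = R.act c b := by
    intro n
    induction n with
    | zero => rfl
    | succ n ih =>
      show R.apw (R.act c b) ([b, a] ++ wpow [b, a] n) = _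
      rw [R.apw_append]
      have : R.apw (R.act c b) [b, a] = R.act c b := by
        show R.act (R.act (R.act c b) b) a = R.act c b
        rw [R.invol, h]
      rw [this, ih]
  rw [fix]
  show R.act (R.act c b) b = c
  rw [R.invol]
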